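/- For every d ≥ 1 and every nonzero vector k ∈ ℤ^d there exist vectors k¹, k², …, k^d ∈ ℤ^d with k¹ = k such that the vectors k¹, …, k^d are pairwise orthogonal with respect to the standard Euclidean inner product on ℝ^d and each kⁱ is nonzero; in particular (k¹, …, k^d) is an orthogonal basis of ℝ^d. -/

import Mathlib

lemma extend_orth (d m : ℕ) (hm : m < d) (u : Fin m → (Fin d → ℤ)) :
    ∃ w : Fin d → ℤ, w ≠ 0 ∧ ∀ i, ∑ l, w l * u i l = 0 := by
  set L : (Fin d → ℚ) →ₗ[ℚ] (Fin m → ℚ) :=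
    LinearMap.pi (fun i => ∑ l, ((u i l : ℚ)) • LinearMap.proj l) with hL
  have hker : LinearMap.ker L ≠ ⊥ := by
    intro h
    have hinj : Function.Injective L := LinearMap.ker_eq_bot.mp h
    have := LinearMap.finrank_le_finrank_of_injective hinj
    simp [Module.finrank_pi] at this
    omega
  obtain ⟨x, hxmem, hx0⟩ := Submodule.exists_mem_ne_zero_of_ne_bot hker
  have hxker : ∀ i, ∑ l, (u i l : ℚ) * x l = 0 := by
    intro i
    have := congrFun (LinearMap.mem_ker.mp hxmem) i
    simpa [hL, LinearMap.pi_apply, LinearMap.sum_apply] using this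
  -- clear denominators
  set N : ℤ := ∏ l, ((x l).den : ℤ) with hN
  have hNl : ∀ l : Fin d, ((x l).den : ℤ) * ∏ l' ∈ Finset.univ.erase l, ((x l').den : ℤ) = N := by
    intro l
    rw [hN]
    exact Finset.mul_prod_erase Finset.univ (fun l' => ((x l').den : ℤ)) (Finset.mem_univ l)
  refine ⟨fun l => (x l).num * ∏ l' ∈ Finset.univ.erase l, ((x l').den : ℤ), ?_, ?_⟩
  · -- nonzero
    obtain ⟨l, hl⟩ : ∃ l, x l ≠ 0 := by
      by_contra h
      push_neg at h
      exact hx0 (funext h)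
    intro h
    have := congrFun h l
    simp only [Pi.zero_apply, mul_eq_zero] at this
    rcases this with h1 | h2
    · exact hl (Rat.num_eq_zero.mp h1)
    · have : ∀ l' ∈ Finset.univ.erase l, ((x l').den : ℤ) ≠ 0 := by
        intro l' _
        exact_mod_cast (x l').den_nz
      exact absurd h2 (Finset.prod_ne_zero_iff.mpr this)
  · intro i
    have key : ∀ l : Fin d, (((x l).num * ∏ l' ∈ Finset.univ.erase l, ((x l').den : ℤ) : ℤ) : ℚ)
        = x l * (N : ℚ) := by
      intro l
      have hden : ((x l).den : ℚ) ≠ 0 := by exact_mod_cast (x l).den_nz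
      have h1 : ((x l).num : ℚ) = x l * ((x l).den : ℚ) := by
        have h2 := Rat.num_div_den (x l)
        rw [div_eq_iff hden] at h2
        exact h2
      push_cast
      rw [h1, mul_assoc, ← hNl l]
      push_cast
      ring
    have hcast : ((∑ l, ((x l).num * ∏ l' ∈ Finset.univ.erase l, ((x l').den : ℤ)) * u i l : ℤ) : ℚ) = 0 := by
      rw [Int.cast_sum]
      have step1 : ∀ l ∈ Finset.univ, ((((x l).num * ∏ l' ∈ Finset.univ.erase l, ((x l').den : ℤ)) * u i l : ℤ) : ℚ)
          = (N : ℚ) * ((u i l : ℚ) * x l) := by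
        intro l _
        rw [Int.cast_mul, key l]
        ring
      rw [Finset.sum_congr rfl step1, ← Finset.mul_sum, hxker i, mul_zero]
    exact_mod_cast hcast

lemma build_orth (d : ℕ) (k : Fin d → ℤ) (hk : k ≠ 0) :
    ∀ m, 1 ≤ m → m ≤ d →
    ∃ v : Fin m → (Fin d → ℤ),
      (∀ h0 : 0 < m, v ⟨0, h0⟩ = k) ∧ (∀ i, v i ≠ 0) ∧
      ∀ i j, i ≠ j → ∑ l, v i l * v j l = 0 := by
  intro m hm
  induction m, hm using Nat.le_induction with
  | base =>
    intro _
    exact ⟨fun _ => k, fun _ => rfl, fun _ => hk,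
      fun i j hij => absurd (Subsingleton.elim i j) hij⟩
  | succ m hm ih =>
    intro hmd
    obtain ⟨v, hv0, hvne, hvorth⟩ := ih (by omega)
    obtain ⟨w, hw0, hworth⟩ := extend_orth d m (by omega) v
    refine ⟨Fin.snoc v w, ?_, ?_, ?_⟩
    · intro h0
      have : (⟨0, h0⟩ : Fin (m+1)) = Fin.castSucc ⟨0, by omega⟩ := rfl
      rw [this, Fin.snoc_castSucc]
      exact hv0 (by omega)
    · intro i
      refine Fin.lastCases ?_ ?_ i
      · rw [Fin.snoc_last]; exact hw0
      · intro i'; rw [Fin.snoc_castSucc]; exact hvne i'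
    · intro i j hij
      rcases Fin.eq_castSucc_or_eq_last i with ⟨i', rfl⟩ | rfl <;>
        rcases Fin.eq_castSucc_or_eq_last j with ⟨j', rfl⟩ | rfl <;>
        simp only [Fin.snoc_last, Fin.snoc_castSucc]
      · exact hvorth i' j' fun h => hij (by rw [h])
      · rw [Finset.sum_congr rfl fun l _ => mul_comm (v i' l) (w l)]
        exact hworth i'
      · exact hworth j'
      · exact absurd rfl hij




/-- For every `d ≥ 1` and every nonzero `k ∈ ℤ^d` there exist `k¹ = k, k², …, k^d ∈ ℤ^d`,
pairwise orthogonal for the Euclidean inner product and all nonzero; in particular their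
real images form an (orthogonal) basis of `ℝ^d`. -/
theorem stmt_2 (d : ℕ) (hd : 1 ≤ d) (k : Fin d → ℤ) (hk : k ≠ 0) :
    ∃ v : Fin d → (Fin d → ℤ),
      v ⟨0, hd⟩ = k ∧
      (∀ i, v i ≠ 0) ∧
      (∀ i j, i ≠ j → ∑ l, ((v i l : ℝ) * (v j l : ℝ)) = 0) ∧
      ∃ B : Module.Basis (Fin d) ℝ (EuclideanSpace ℝ (Fin d)),
        ∀ i l, B i l = (v i l : ℝ) := by
  obtain ⟨v, hv0, hvne, hvorth⟩ := build_orth d k hk d hd le_rfl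
  have horthR : ∀ i j, i ≠ j → ∑ l, ((v i l : ℝ) * (v j l : ℝ)) = 0 := by
    intro i j hij
    have := hvorth i j hij
    exact_mod_cast congrArg (Int.cast : ℤ → ℝ) this
  refine ⟨v, hv0 hd, hvne, horthR, ?_⟩
  set f : Fin d → EuclideanSpace ℝ (Fin d) := fun i => WithLp.toLp 2 (fun l => (v i l : ℝ)) with hf
  have hnormpos : ∀ i, 0 < ∑ l, ((v i l : ℝ) * (v i l : ℝ)) := by
    intro i
    obtain ⟨l, hl⟩ : ∃ l, v i l ≠ 0 := by
      by_contra h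
      push_neg at h
      exact hvne i (funext h)
    refine Finset.sum_pos' (fun l _ => mul_self_nonneg _) ⟨l, Finset.mem_univ l, ?_⟩
    exact mul_self_pos.mpr (Int.cast_ne_zero.mpr hl)
  have hli : LinearIndependent ℝ f := by
    rw [Fintype.linearIndependent_iff]
    intro g hg j
    have hcoord : ∀ l, ∑ i, g i * (v i l : ℝ) = 0 := by
      intro l
      have hg' : ∑ i, g i • ((fun l => (v i l : ℝ)) : Fin d → ℝ) = 0 := by
        have := congrArg WithLp.ofLp hg
        simpa [hf] using this
      have := congrFun hg' l
      simpa [Finset.sum_apply, Pi.smul_apply, smul_eq_mul] using this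
    have key : ∑ l, (v j l : ℝ) * (∑ i, g i * (v i l : ℝ)) = g j * ∑ l, ((v j l : ℝ) * (v j l : ℝ)) := by
      have h1 : ∀ l ∈ Finset.univ, (v j l : ℝ) * ∑ i, g i * (v i l : ℝ)
          = ∑ i, g i * ((v j l : ℝ) * (v i l : ℝ)) := by
        intro l _
        rw [Finset.mul_sum]
        exact Finset.sum_congr rfl fun i _ => by ring
      rw [Finset.sum_congr rfl h1, Finset.sum_comm,
        Finset.sum_congr rfl fun i (_ : i ∈ Finset.univ) =>
          (Finset.mul_sum Finset.univ (fun l => (v j l : ℝ) * (v i l : ℝ)) (g i)).symm]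
      rw [Finset.sum_eq_single j]
      · intro i _ hij
        rw [horthR j i (Ne.symm hij), mul_zero]
      · intro h
        exact absurd (Finset.mem_univ j) h
    have : g j * ∑ l, ((v j l : ℝ) * (v j l : ℝ)) = 0 := by
      rw [← key]
      simp [hcoord]
    rcases mul_eq_zero.mp this with h | h
    · exact h
    · exact absurd h (ne_of_gt (hnormpos j))
  have hcard : Fintype.card (Fin d) = Module.finrank ℝ (EuclideanSpace ℝ (Fin d)) := by
    simp [finrank_euclideanSpace_fin]
  haveI : Nonempty (Fin d) := ⟨⟨0, hd⟩⟩
  refine ⟨basisOfLinearIndependentOfCardEqFinrank hli hcard, fun i l => ?_⟩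
  rw [coe_basisOfLinearIndependentOfCardEqFinrank]
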